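/- The 4×4 matrix A with rows (1,1,2,2),(1,0,1,2),(2,1,0,1),(2,2,1,1) satisfies rank(A) = 3, rk₊(A) = 3, and st₊(A) = 4; in particular st₊(A) > rk₊(A). -/

import Mathlib

open Matrix

noncomputable def sntRank {m : Type*} [Fintype m] (A : Matrix m m ℝ) : ℕ :=
  sInf {k : ℕ | ∃ B : Matrix m (Fin k) ℝ, ∃ C : Matrix (Fin k) (Fin k) ℝ,
    (∀ i j, 0 ≤ B i j) ∧ (∀ i j, 0 ≤ C i j) ∧ C.IsSymm ∧ A = B * C * Bᵀ}


noncomputable def nnRank {m n : Type*} [Fintype m] [Fintype n] (A : Matrix m n ℝ) : ℕ :=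
  sInf {k : ℕ | ∃ U : Matrix m (Fin k) ℝ, ∃ V : Matrix n (Fin k) ℝ,
    (∀ i j, 0 ≤ U i j) ∧ (∀ i j, 0 ≤ V i j) ∧ A = U * Vᵀ}

noncomputable def A4 : Matrix (Fin 4) (Fin 4) ℝ := !![1,1,2,2; 1,0,1,2; 2,1,0,1; 2,2,1,1]
noncomputable def U4 : Matrix (Fin 4) (Fin 3) ℝ := !![1,0,1; 1,0,0; 0,1,0; 0,1,1]
noncomputable def V4 : Matrix (Fin 4) (Fin 3) ℝ := !![1,2,0; 0,1,1; 1,0,1; 2,1,0]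
def P34 : Matrix (Fin 3) (Fin 4) ℝ := !![1,0,0,0; 0,1,0,0; 0,0,1,0]

lemma hUV : A4 = U4 * V4ᵀ := by
  ext i j
  fin_cases i <;> fin_cases j <;>
    simp [A4, U4, V4, Matrix.mul_apply, Matrix.transpose_apply, Matrix.vecHead, Matrix.vecTail,
      Fin.sum_univ_four, Fin.sum_univ_three] <;> norm_num

lemma hPAP : P34 * A4 * P34ᵀ = !![1,1,2; 1,0,1; 2,1,0] := by
  ext i j
  fin_cases i <;> fin_cases j <;>
    simp [A4, P34, Matrix.mul_apply, Matrix.transpose_apply, Matrix.vecHead, Matrix.vecTail,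
      Fin.sum_univ_four, Fin.sum_univ_three]

lemma rankA4 : A4.rank = 3 := by
  refine le_antisymm ?_ ?_
  · rw [hUV]
    exact (Matrix.rank_mul_le_left U4 V4ᵀ).trans (by simpa using Matrix.rank_le_card_width U4)
  · have hunit : IsUnit (!![(1:ℝ),1,2; 1,0,1; 2,1,0]) := by
      rw [Matrix.isUnit_iff_isUnit_det, isUnit_iff_ne_zero, Matrix.det_fin_three]
      norm_num [Matrix.cons_val_two, Matrix.cons_val_one, Matrix.cons_val_zero]
    have h3 : (!![(1:ℝ),1,2; 1,0,1; 2,1,0]).rank = 3 := by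
      simpa using Matrix.rank_of_isUnit _ hunit
    calc (3:ℕ) = (P34 * A4 * P34ᵀ).rank := by rw [hPAP, h3]
    _ ≤ (P34 * A4).rank := Matrix.rank_mul_le_left _ _
    _ ≤ A4.rank := Matrix.rank_mul_le_right _ _

lemma mul3_left {x y z : ℝ} (h : x * y * z = 0) (hx : x ≠ 0) (hz : z ≠ 0) : y = 0 := by
  rcases mul_eq_zero.1 h with h' | h'
  · rcases mul_eq_zero.1 h' with h'' | h''
    · exact absurd h'' hx
    · exact h''
  · exact absurd h' hz

lemma mul3_right {x y z : ℝ} (h : x * y * z = 0) (hx : x ≠ 0) (hy : y ≠ 0) : z = 0 := by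
  rcases mul_eq_zero.1 h with h' | h'
  · rcases mul_eq_zero.1 h' with h'' | h''
    · exact absurd h'' hx
    · exact absurd h'' hy
  · exact h'

lemma core (a b c d X Y up uq t wp wq t' : ℝ)
    (hX : 0 < X) (hY : 0 < Y)
    (hb : 0 ≤ b) (hc : 0 ≤ c) (hd : 0 ≤ d)
    (ht : 0 ≤ t) (huq : 0 ≤ uq)
    (hwp : 0 ≤ wp) (ht' : 0 ≤ t')
    (h0 : a*X*Y = 1)
    (h1 : X*(a*uq + b*t) = 1)
    (h2 : Y*(a*wp + c*t') = 1)
    (h4 : Y*(a*up + c*t) = 2)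
    (h5 : X*(a*wq + b*t') = 2)
    (h3 : a*(up*wq + uq*wp) + b*(up*t' + t*wp) + c*(uq*t' + t*wq) + d*(t*t') = 2) :
    False := by
  have euq : uq = Y*(1 - b*X*t) := by linear_combination (-uq)*h0 + Y*h1
  have ewp : wp = X*(1 - c*Y*t') := by linear_combination (-wp)*h0 + X*h2
  have eup : up = X*(2 - c*Y*t) := by linear_combination (-up)*h0 + X*h4
  have ewq : wq = Y*(2 - b*X*t') := by linear_combination (-wq)*h0 + Y*h5
  rw [eup, euq, ewp, ewq] at h3
  have hred : (b*X*t)*(c*Y*t') + (b*X*t')*(c*Y*t) = 3 + d*(t*t') := by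
    linear_combination ((2-c*Y*t)*(2-b*X*t') + (1-b*X*t)*(1-c*Y*t'))*h0 - h3
  have hβ : b*X*t ≤ 1 := by nlinarith [huq, euq]
  have hγ : c*Y*t' ≤ 1 := by nlinarith [hwp, ewp]
  nlinarith [hred, mul_nonneg (mul_nonneg hb hX.le) ht, mul_nonneg (mul_nonneg hc hY.le) ht',
    mul_nonneg (mul_nonneg hd ht) ht']

lemma L3 (B : Matrix (Fin 4) (Fin 3) ℝ) (C : Matrix (Fin 3) (Fin 3) ℝ)
    (hB : ∀ i j, 0 ≤ B i j) (hC : ∀ i j, 0 ≤ C i j) (hs : C.IsSymm)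
    (hA : A4 = B * C * Bᵀ)
    (h11z : ∀ p q, B 1 p * C p q * B 1 q = 0)
    (h22z : ∀ p q, B 2 p * C p q * B 2 q = 0)
    (hX : 0 < B 1 0) (ha : 0 < C 0 1) (hY : 0 < B 2 1) : False := by
  have hs10 : C 1 0 = C 0 1 := congrFun (congrFun hs 0) 1
  have hs20 : C 2 0 = C 0 2 := congrFun (congrFun hs 0) 2
  have hs21 : C 2 1 = C 1 2 := congrFun (congrFun hs 1) 2
  -- det C ≠ 0
  have hM : P34 * A4 * P34ᵀ = (P34 * B) * C * (P34 * B)ᵀ := by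
    rw [hA, Matrix.transpose_mul]
    simp only [Matrix.mul_assoc]
  have hdetC : C.det ≠ 0 := by
    intro h
    have h3det := hPAP
    have : ((P34 * B) * C * (P34 * B)ᵀ).det = (3:ℝ) := by
      rw [← hM, hPAP, Matrix.det_fin_three]; norm_num [Matrix.cons_val_two, Matrix.cons_val_one, Matrix.cons_val_zero]
    rw [Matrix.det_mul, Matrix.det_mul, h] at this
    simp at this
  -- basic zeros
  have hC00 : C 0 0 = 0 := mul3_left (h11z 0 0) hX.ne' hX.ne'
  have hC11 : C 1 1 = 0 := mul3_left (h22z 1 1) hY.ne' hY.ne'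
  have hB11 : B 1 1 = 0 := by
    have h := h11z 0 1
    exact mul3_right h hX.ne' ha.ne'
  have hB20 : B 2 0 = 0 := by
    have h := h22z 1 0
    rw [hs10] at h
    exact mul3_right h hY.ne' ha.ne'
  by_cases hr : B 1 2 = 0
  · by_cases hr' : B 2 2 = 0
    · -- main case
      have h12 : (B * C * Bᵀ) 1 2 = 1 := by rw [← hA]; simp [A4]
      have h01 : (B * C * Bᵀ) 0 1 = 1 := by rw [← hA]; norm_num [A4]
      have h32 : (B * C * Bᵀ) 3 2 = 1 := by rw [← hA]; simp [A4]
      have h02 : (B * C * Bᵀ) 0 2 = 2 := by rw [← hA]; simp [A4]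
      have h31 : (B * C * Bᵀ) 3 1 = 2 := by rw [← hA]; simp [A4]
      have h03 : (B * C * Bᵀ) 0 3 = 2 := by rw [← hA]; simp [A4]
      simp only [Matrix.mul_apply, Matrix.transpose_apply, Fin.sum_univ_three] at h12 h01 h32 h02 h31 h03
      simp only [hB11, hB20, hr, hr', hC00, hC11, hs10, hs20, hs21] at h12 h01 h32 h02 h31 h03
      exact core (C 0 1) (C 0 2) (C 1 2) (C 2 2) (B 1 0) (B 2 1)
        (B 0 0) (B 0 1) (B 0 2) (B 3 0) (B 3 1) (B 3 2)
        hX hY (hC 0 2) (hC 1 2) (hC 2 2) (hB 0 2) (hB 0 1) (hB 3 0) (hB 3 2)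
        (by linear_combination h12) (by linear_combination h01) (by linear_combination h32)
        (by linear_combination h02) (by linear_combination h31) (by linear_combination h03)
    · have hr2 : 0 < B 2 2 := (hB 2 2).lt_of_ne (Ne.symm hr')
      have hC12 : C 1 2 = 0 := mul3_left (h22z 1 2) hY.ne' hr2.ne'
      have hC22 : C 2 2 = 0 := mul3_left (h22z 2 2) hr2.ne' hr2.ne'
      apply hdetC
      rw [Matrix.det_fin_three, hC00, hC11, hC12, hC22, hs21, hC12]
      ring
  · have hr1 : 0 < B 1 2 := (hB 1 2).lt_of_ne (Ne.symm hr)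
    have hC02 : C 0 2 = 0 := mul3_left (h11z 0 2) hX.ne' hr1.ne'
    have hC22 : C 2 2 = 0 := mul3_left (h11z 2 2) hr1.ne' hr1.ne'
    apply hdetC
    rw [Matrix.det_fin_three, hC00, hC11, hC02, hC22, hs20, hC02]
    ring

lemma L4 (B : Matrix (Fin 4) (Fin 3) ℝ) (C : Matrix (Fin 3) (Fin 3) ℝ)
    (hB : ∀ i j, 0 ≤ B i j) (hC : ∀ i j, 0 ≤ C i j) (hs : C.IsSymm)
    (hA : A4 = B * C * Bᵀ) : False := by
  have h11 : (B * C * Bᵀ) 1 1 = 0 := by rw [← hA]; norm_num [A4]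
  have h22 : (B * C * Bᵀ) 2 2 = 0 := by rw [← hA]; simp [A4]
  have h12 : (B * C * Bᵀ) 1 2 = 1 := by rw [← hA]; simp [A4]
  simp only [Matrix.mul_apply, Matrix.transpose_apply, Fin.sum_univ_three] at h11 h22 h12
  have nn1 : ∀ p q, 0 ≤ B 1 p * C p q * B 1 q :=
    fun p q => mul_nonneg (mul_nonneg (hB 1 p) (hC p q)) (hB 1 q)
  have nn2 : ∀ p q, 0 ≤ B 2 p * C p q * B 2 q :=
    fun p q => mul_nonneg (mul_nonneg (hB 2 p) (hC p q)) (hB 2 q)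
  have h11z : ∀ p q, B 1 p * C p q * B 1 q = 0 := by
    intro p q
    fin_cases p <;> fin_cases q <;>
      simp only [Fin.zero_eta, Fin.mk_one, Fin.reduceFinMk] <;>
      linarith [h11, nn1 0 0, nn1 0 1, nn1 0 2, nn1 1 0, nn1 1 1, nn1 1 2, nn1 2 0, nn1 2 1, nn1 2 2]
  have h22z : ∀ p q, B 2 p * C p q * B 2 q = 0 := by
    intro p q
    fin_cases p <;> fin_cases q <;>
      simp only [Fin.zero_eta, Fin.mk_one, Fin.reduceFinMk] <;>
      linarith [h22, nn2 0 0, nn2 0 1, nn2 0 2, nn2 1 0, nn2 1 1, nn2 1 2, nn2 2 0, nn2 2 1, nn2 2 2]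
  have hex : ∃ p q, 0 < B 1 p * C p q * B 2 q := by
    by_contra h
    push_neg at h
    linarith [h12, h 0 0, h 0 1, h 0 2, h 1 0, h 1 1, h 1 2, h 2 0, h 2 1, h 2 2]
  obtain ⟨p, q, hpq⟩ := hex
  have hp : 0 < B 1 p := by
    rcases (hB 1 p).lt_or_eq with h | h
    · exact h
    · rw [← h] at hpq; simp at hpq
  have hcpq : 0 < C p q := by
    rcases (hC p q).lt_or_eq with h | h
    · exact h
    · rw [← h] at hpq; simp at hpq
  have hq : 0 < B 2 q := by
    rcases (hB 2 q).lt_or_eq with h | h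
    · exact h
    · rw [← h] at hpq; simp at hpq
  have hne : p ≠ q := by
    rintro rfl
    have := h11z p p
    nlinarith [mul_pos (mul_pos hp hcpq) hp]
  -- permute
  have main : ∀ σ : Fin 3 ≃ Fin 3, σ 0 = p → σ 1 = q → False := by
    intro σ h0 h1
    apply L3 (B.submatrix id ⇑σ) (C.submatrix ⇑σ ⇑σ)
      (fun i j => hB i (σ j)) (fun i j => hC (σ i) (σ j))
      (by unfold Matrix.IsSymm; rw [Matrix.transpose_submatrix, hs])
      ?_ (fun p' q' => h11z (σ p') (σ q')) (fun p' q' => h22z (σ p') (σ q'))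
      (by simpa [h0] using hp) (by simpa [h0, h1] using hcpq) (by simpa [h1] using hq)
    rw [hA]
    rw [Matrix.transpose_submatrix]
    rw [Matrix.submatrix_mul_equiv B C id σ ⇑σ]
    rw [Matrix.submatrix_mul_equiv (B*C) Bᵀ id σ id]
    simp
  fin_cases p <;> fin_cases q <;> first
    | exact absurd rfl hne
    | exact main (Equiv.ofBijective ![0,1,2] (by decide)) rfl rfl
    | exact main (Equiv.ofBijective ![0,2,1] (by decide)) rfl rfl
    | exact main (Equiv.ofBijective ![1,0,2] (by decide)) rfl rfl
    | exact main (Equiv.ofBijective ![1,2,0] (by decide)) rfl rfl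
    | exact main (Equiv.ofBijective ![2,0,1] (by decide)) rfl rfl
    | exact main (Equiv.ofBijective ![2,1,0] (by decide)) rfl rfl

lemma nnRank_A4 : nnRank A4 = 3 := by
  have h3S : 3 ∈ {k : ℕ | ∃ U : Matrix (Fin 4) (Fin k) ℝ, ∃ V : Matrix (Fin 4) (Fin k) ℝ,
      (∀ i j, 0 ≤ U i j) ∧ (∀ i j, 0 ≤ V i j) ∧ A4 = U * Vᵀ} := by
    refine ⟨U4, V4, ?_, ?_, hUV⟩
    · intro i j; fin_cases i <;> fin_cases j <;> norm_num [U4]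
    · intro i j; fin_cases i <;> fin_cases j <;> norm_num [V4]
  have hlow : ∀ k ∈ {k : ℕ | ∃ U : Matrix (Fin 4) (Fin k) ℝ, ∃ V : Matrix (Fin 4) (Fin k) ℝ,
      (∀ i j, 0 ≤ U i j) ∧ (∀ i j, 0 ≤ V i j) ∧ A4 = U * Vᵀ}, 3 ≤ k := by
    rintro k ⟨U, V, -, -, hUV'⟩
    have : A4.rank ≤ k := by
      rw [hUV']
      exact (Matrix.rank_mul_le_left U Vᵀ).trans (by simpa using Matrix.rank_le_card_width U)
    rwa [rankA4] at this
  exact le_antisymm (Nat.sInf_le h3S) (hlow _ (Nat.sInf_mem ⟨3, h3S⟩))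

lemma sntRank_A4 : sntRank A4 = 4 := by
  have h4S : 4 ∈ {k : ℕ | ∃ B : Matrix (Fin 4) (Fin k) ℝ, ∃ C : Matrix (Fin k) (Fin k) ℝ,
      (∀ i j, 0 ≤ B i j) ∧ (∀ i j, 0 ≤ C i j) ∧ C.IsSymm ∧ A4 = B * C * Bᵀ} := by
    refine ⟨1, A4, ?_, ?_, ?_, ?_⟩
    · intro i j; by_cases h : i = j <;> simp [Matrix.one_apply, h]
    · intro i j; fin_cases i <;> fin_cases j <;> norm_num [A4]
    · rw [Matrix.IsSymm]
      ext i j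
      fin_cases i <;> fin_cases j <;>
        simp [A4, Matrix.transpose_apply, Matrix.vecHead, Matrix.vecTail]
    · rw [Matrix.transpose_one, Matrix.mul_one, Matrix.one_mul]
  have hlow : ∀ k ∈ {k : ℕ | ∃ B : Matrix (Fin 4) (Fin k) ℝ, ∃ C : Matrix (Fin k) (Fin k) ℝ,
      (∀ i j, 0 ≤ B i j) ∧ (∀ i j, 0 ≤ C i j) ∧ C.IsSymm ∧ A4 = B * C * Bᵀ}, 4 ≤ k := by
    rintro k ⟨B, C, hB, hC, hs, hA⟩
    have hk3 : 3 ≤ k := by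
      have : A4.rank ≤ k := by
        rw [hA]
        exact ((Matrix.rank_mul_le_left (B*C) Bᵀ).trans
          ((Matrix.rank_mul_le_left B C).trans (by simpa using Matrix.rank_le_card_width B)))
      rwa [rankA4] at this
    by_contra hcon
    push_neg at hcon
    have hk : k = 3 := by omega
    subst hk
    exact L4 B C hB hC hs hA
  exact le_antisymm (Nat.sInf_le h4S) (hlow _ (Nat.sInf_mem ⟨4, h4S⟩))

theorem stmt_13 :
    (!![(1:ℝ),1,2,2; 1,0,1,2; 2,1,0,1; 2,2,1,1]).rank = 3 ∧
    nnRank !![(1:ℝ),1,2,2; 1,0,1,2; 2,1,0,1; 2,2,1,1] = 3 ∧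
    sntRank !![(1:ℝ),1,2,2; 1,0,1,2; 2,1,0,1; 2,2,1,1] = 4 ∧
    nnRank !![(1:ℝ),1,2,2; 1,0,1,2; 2,1,0,1; 2,2,1,1] <
      sntRank !![(1:ℝ),1,2,2; 1,0,1,2; 2,1,0,1; 2,2,1,1] := by
  have hA : !![(1:ℝ),1,2,2; 1,0,1,2; 2,1,0,1; 2,2,1,1] = A4 := rfl
  rw [hA, rankA4, nnRank_A4, sntRank_A4]
  norm_num
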